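/- Let A > 0 and K > 0, let g : [0,∞) → [0,∞) be locally Lebesgue integrable, and let S : [0,∞) → [0,A] be continuous with S(0) > 0 and satisfy S(t) ≤ S(0) + K·∫₀ᵗ g(τ)·F_A(S(τ)) dτ for all t ≥ 0. Then for every t ≥ 0, S(t)/(eA) ≤ (S(0)/(eA))^{σ(t)}, where σ(t) = exp(−K·log(e+1)·∫₀ᵗ g(τ) dτ). -/

import Mathlib

open MeasureTheory

/-- The Osgood modulus F_A(x) = x·log(e + A/x) for x ∈ (0,A], F_A(0) = 0. -/
noncomputable def osgoodMod (A : ℝ) : ℝ → ℝ :=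
  fun x => if x = 0 then 0 else x * Real.log (Real.exp 1 + A / x)

namespace OsgoodAux

/-- Truncated modulus: `tl A s = y (log(eA) - log y)` with `y = min s A`. -/
noncomputable def tl (A : ℝ) (s : ℝ) : ℝ :=
  min s A * (Real.log (Real.exp 1 * A) - Real.log (min s A))

lemma tl_continuous (A : ℝ) : Continuous (tl A) := by
  have h : Continuous fun y : ℝ => y * (Real.log (Real.exp 1 * A) - Real.log y) := by
    have h2 : Continuous fun y : ℝ => y * Real.log (Real.exp 1 * A) - y * Real.log y :=
      (continuous_id.mul continuous_const).sub Real.continuous_mul_log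
    simpa [mul_sub] using h2
  exact h.comp (continuous_id.min continuous_const)

variable {A : ℝ}

lemma log_eA (hA : 0 < A) : Real.log (Real.exp 1 * A) = 1 + Real.log A := by
  rw [Real.log_mul (Real.exp_ne_zero 1) hA.ne', Real.log_exp]

lemma tl_eq {s : ℝ} (hs : s ≤ A) :
    tl A s = s * (Real.log (Real.exp 1 * A) - Real.log s) := by
  rw [tl, min_eq_left hs]

lemma factor_ge_one (hA : 0 < A) {y : ℝ} (hy0 : 0 < y) (hy : y ≤ A) :
    1 ≤ Real.log (Real.exp 1 * A) - Real.log y := by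
  rw [log_eA hA]
  have := Real.log_le_log hy0 hy
  linarith

lemma tl_pos (hA : 0 < A) {s : ℝ} (hs0 : 0 < s) (hsA : s ≤ A) : 0 < tl A s := by
  rw [tl_eq hsA]
  have := factor_ge_one hA hs0 hsA
  nlinarith

lemma tl_nonneg (hA : 0 < A) {s : ℝ} (hs : 0 ≤ s) : 0 ≤ tl A s := by
  have hy0 : 0 ≤ min s A := le_min hs hA.le
  rcases hy0.eq_or_lt with h | h
  · rw [tl, ← h]; simp
  · have hyA : min s A ≤ A := min_le_right _ _
    have h1 := factor_ge_one hA h hyA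
    rw [tl]; nlinarith

lemma tl_le_A (hA : 0 < A) {s : ℝ} (hs : 0 ≤ s) : tl A s ≤ A := by
  have hy0 : 0 ≤ min s A := le_min hs hA.le
  rcases hy0.eq_or_lt with h | h
  · rw [tl, ← h]; simpa using hA.le
  · have hyA : min s A ≤ A := min_le_right _ _
    set y := min s A with hy
    have hlog : Real.log (A / y) ≤ A / y - 1 := Real.log_le_sub_one_of_pos (div_pos hA h)
    have hld : Real.log (A / y) = Real.log A - Real.log y := Real.log_div hA.ne' h.ne'
    have hfac : Real.log (Real.exp 1 * A) - Real.log y ≤ A / y := by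
      rw [log_eA hA]; linarith
    have : tl A s ≤ y * (A / y) := by
      rw [tl, ← hy]
      exact mul_le_mul_of_nonneg_left hfac h.le
    rwa [mul_div_cancel₀ A h.ne'] at this

lemma tl_mono (hA : 0 < A) {a b : ℝ} (ha : 0 ≤ a) (hab : a ≤ b) : tl A a ≤ tl A b := by
  set c := Real.log (Real.exp 1 * A) with hc
  set x := min a A with hx
  set y := min b A with hyd
  have hx0 : 0 ≤ x := le_min ha hA.le
  have hxy : x ≤ y := min_le_min hab le_rfl
  have hyA : y ≤ A := min_le_right _ _
  rcases hx0.eq_or_lt with h | h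
  · rw [tl, ← hx, ← h]
    simpa using tl_nonneg hA (ha.trans hab)
  · -- 0 < x ≤ y ≤ A
    have key : MonotoneOn (fun z : ℝ => z * (c - Real.log z)) (Set.Icc x y) := by
      have hder : ∀ z : ℝ, z ≠ 0 →
          HasDerivAt (fun z : ℝ => z * (c - Real.log z)) (c - (Real.log z + 1)) z := by
        intro z hz
        have h1 : HasDerivAt (fun z : ℝ => z * c) c z := hasDerivAt_mul_const c
        have h2 := Real.hasDerivAt_mul_log hz
        have h3 := h1.sub h2
        refine h3.congr_of_eventuallyEq (Filter.Eventually.of_forall fun w => ?_)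
        · show w * (c - Real.log w) = w * c - w * Real.log w; ring
      apply monotoneOn_of_deriv_nonneg (convex_Icc x y)
      · exact Continuous.continuousOn (by
          have h2 : Continuous fun z : ℝ => z * c - z * Real.log z :=
            (continuous_id.mul continuous_const).sub Real.continuous_mul_log
          simpa [mul_sub] using h2)
      · intro z hz
        rw [interior_Icc] at hz
        exact ((hder z (h.trans hz.1).ne').differentiableAt).differentiableWithinAt
      · intro z hz
        rw [interior_Icc] at hz
        rw [(hder z (h.trans hz.1).ne').deriv]
        have hzA : z ≤ A := hz.2.le.trans hyA
        have := Real.log_le_log (h.trans hz.1) hzA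
        rw [hc, log_eA hA]
        linarith
    have := key (Set.left_mem_Icc.2 hxy) (Set.right_mem_Icc.2 hxy) hxy
    simpa [tl, ← hx, ← hyd, ← hc] using this

/-- The key pointwise inequality `F_A(s) ≤ log(e+1) · tl A s` on `[0, A]`. -/
lemma osgood_le_tl (hA : 0 < A) {s : ℝ} (hs0 : 0 ≤ s) (hsA : s ≤ A) :
    osgoodMod A s ≤ Real.log (Real.exp 1 + 1) * tl A s := by
  rcases hs0.eq_or_lt with h | h
  · rw [osgoodMod, ← h]
    simp only [if_pos rfl]
    have h0 : min (0:ℝ) A = 0 := min_eq_left hA.le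
    rw [tl, h0]
    simp
  · simp only [osgoodMod]
    rw [if_neg h.ne', tl_eq hsA]
    have he : (1 : ℝ) < Real.exp 1 := by
      have := Real.exp_one_gt_d9; linarith
    have hE1 : 1 ≤ Real.log (Real.exp 1 + 1) := by
      have h1 : Real.log (Real.exp 1) ≤ Real.log (Real.exp 1 + 1) :=
        Real.log_le_log (Real.exp_pos 1) (by linarith)
      rwa [Real.log_exp] at h1
    have hAs1 : 1 ≤ A / s := (one_le_div h).2 hsA
    have h1 : Real.exp 1 + A / s ≤ (Real.exp 1 + 1) * (A / s) := by nlinarith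
    have h2 : Real.log (Real.exp 1 + A / s) ≤ Real.log ((Real.exp 1 + 1) * (A / s)) :=
      Real.log_le_log (by positivity) h1
    have h3 : Real.log ((Real.exp 1 + 1) * (A / s)) =
        Real.log (Real.exp 1 + 1) + Real.log (A / s) :=
      Real.log_mul (by positivity) (by positivity)
    have h4 : Real.log (A / s) = Real.log A - Real.log s := Real.log_div hA.ne' h.ne'
    have h5 : 0 ≤ Real.log (A / s) := Real.log_nonneg hAs1
    have h6 : Real.log (Real.exp 1 + A / s) ≤
        Real.log (Real.exp 1 + 1) * (Real.log (Real.exp 1 * A) - Real.log s) := by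
      rw [log_eA hA]
      nlinarith [h2, h3.le, h4, h5, hE1]
    nlinarith [h6, h.le]

lemma osgood_nonneg (hA : 0 < A) {s : ℝ} (hs0 : 0 ≤ s) : 0 ≤ osgoodMod A s := by
  rcases hs0.eq_or_lt with h | h
  · rw [osgoodMod, ← h]; simp
  · rw [osgoodMod, if_neg h.ne']
    have : (1:ℝ) ≤ Real.exp 1 + A / s := by
      have := Real.exp_one_gt_d9
      have : (0:ℝ) ≤ A / s := by positivity
      nlinarith [Real.exp_one_gt_d9]
    have := Real.log_nonneg this
    positivity

/-- Explicit antiderivative computation on `(0, A]`. -/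
lemma integral_inv_tl (hA : 0 < A) {a b : ℝ} (ha : 0 < a) (hab : a ≤ b) (hbA : b ≤ A) :
    ∫ s in a..b, (tl A s)⁻¹ =
      Real.log (Real.log (Real.exp 1 * A) - Real.log a) -
        Real.log (Real.log (Real.exp 1 * A) - Real.log b) := by
  set c := Real.log (Real.exp 1 * A) with hc
  have key : ∀ s ∈ Set.uIcc a b,
      HasDerivAt (fun s => -Real.log (c - Real.log s)) ((tl A s)⁻¹) s := by
    intro s hs
    rw [Set.uIcc_of_le hab] at hs
    have hs0 : 0 < s := ha.trans_le hs.1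
    have hsA : s ≤ A := hs.2.trans hbA
    have hfac : 1 ≤ c - Real.log s := factor_ge_one hA hs0 hsA
    have h1 : HasDerivAt (fun s : ℝ => c - Real.log s) (-s⁻¹) s :=
      (Real.hasDerivAt_log hs0.ne').const_sub c
    have h2 : HasDerivAt (fun s => Real.log (c - Real.log s))
        ((c - Real.log s)⁻¹ * -s⁻¹) s :=
      (Real.hasDerivAt_log (by linarith)).comp s h1
    have h3 := h2.neg
    refine h3.congr_deriv ?_
    rw [tl_eq hsA, ← hc, mul_inv]
    ring
  have hcont : ContinuousOn (fun s => (tl A s)⁻¹) (Set.uIcc a b) := by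
    apply ((tl_continuous A).continuousOn).inv₀
    intro s hs
    rw [Set.uIcc_of_le hab] at hs
    exact (tl_pos hA (ha.trans_le hs.1) (hs.2.trans hbA)).ne'
  have := intervalIntegral.integral_eq_sub_of_hasDerivAt key hcont.intervalIntegrable
  rw [this]
  ring

end OsgoodAux

set_option maxHeartbeats 2000000 in
/-- Quantitative Osgood estimate: if S : [0,∞) → [0,A] is continuous, S(0) > 0 and
S(t) ≤ S(0) + K·∫₀ᵗ g(τ)·F_A(S(τ)) dτ, then
S(t)/(eA) ≤ (S(0)/(eA))^{σ(t)} with σ(t) = exp(−K·log(e+1)·∫₀ᵗ g). -/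
theorem stmt_10 (A K : ℝ) (hA : 0 < A) (hK : 0 < K)
    (g : ℝ → ℝ) (hg_nonneg : ∀ t, 0 ≤ t → 0 ≤ g t)
    (hg_loc : ∀ T, 0 < T → IntegrableOn g (Set.Icc 0 T))
    (S : ℝ → ℝ) (hS_cont : ContinuousOn S (Set.Ici 0))
    (hS_mem : ∀ t, 0 ≤ t → S t ∈ Set.Icc 0 A) (hS0 : 0 < S 0)
    (hS : ∀ t, 0 ≤ t → S t ≤ S 0 + K * ∫ τ in Set.Ioc 0 t, g τ * osgoodMod A (S τ)) :
    ∀ t, 0 ≤ t →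
      S t / (Real.exp 1 * A) ≤
        (S 0 / (Real.exp 1 * A)) ^
          (Real.exp (-K * Real.log (Real.exp 1 + 1) * ∫ τ in Set.Ioc 0 t, g τ)) := by
  classical
  intro t ht
  have hB : 0 < Real.exp 1 * A := by positivity
  have hE1 : 1 ≤ Real.log (Real.exp 1 + 1) := by
    have h1 : Real.log (Real.exp 1) ≤ Real.log (Real.exp 1 + 1) :=
      Real.log_le_log (Real.exp_pos 1) (by linarith [Real.exp_pos 1])
    rwa [Real.log_exp] at h1
  set C := K * Real.log (Real.exp 1 + 1) with hCdef
  have hC : 0 < C := mul_pos hK (lt_of_lt_of_le one_pos hE1)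
  have hS0A : S 0 ≤ A := (hS_mem 0 le_rfl).2
  rcases ht.eq_or_lt with h0 | htpos
  · rw [← h0, Set.Ioc_self]
    rw [Measure.restrict_empty, integral_zero_measure, mul_zero, Real.exp_zero, Real.rpow_one]
  -- t > 0 from now on
  have hgI : IntegrableOn g (Set.Icc 0 t) := hg_loc t htpos
  set ψ : ℝ → ℝ := fun τ => g τ * OsgoodAux.tl A (S τ) with hψdef
  set ρ : ℝ → ℝ := fun u => S 0 + C * ∫ τ in Set.Ioc 0 u, ψ τ with hρdef
  have hsub : ∀ u v : ℝ, 0 ≤ u → v ≤ t → Set.Ioc u v ⊆ Set.Icc 0 t :=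
    fun u v hu hvt x hx => ⟨hu.trans hx.1.le, hx.2.trans hvt⟩
  have hSmeas : AEMeasurable S (volume.restrict (Set.Icc 0 t)) :=
    (hS_cont.mono (fun x (hx : x ∈ Set.Icc 0 t) => hx.1)).aemeasurable measurableSet_Icc
  have hψI : IntegrableOn ψ (Set.Icc 0 t) := by
    apply Integrable.mono' (hgI.norm.const_mul A)
      (hgI.aestronglyMeasurable.mul
        (((OsgoodAux.tl_continuous A).measurable.comp_aemeasurable hSmeas).aestronglyMeasurable))
    filter_upwards [ae_restrict_mem measurableSet_Icc] with τ hτ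
    have h1 : 0 ≤ g τ := hg_nonneg τ hτ.1
    have h2 : 0 ≤ OsgoodAux.tl A (S τ) := OsgoodAux.tl_nonneg hA (hS_mem τ hτ.1).1
    have h3 : OsgoodAux.tl A (S τ) ≤ A := OsgoodAux.tl_le_A hA (hS_mem τ hτ.1).1
    have h4 : ‖g τ * OsgoodAux.tl A (S τ)‖ = g τ * OsgoodAux.tl A (S τ) := by
      rw [Real.norm_eq_abs, abs_of_nonneg (mul_nonneg h1 h2)]
    simp only [Pi.mul_apply, Function.comp_apply]
    rw [h4, Real.norm_eq_abs, abs_of_nonneg h1]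
    nlinarith
  have hgIuv : ∀ u v : ℝ, 0 ≤ u → v ≤ t → IntegrableOn g (Set.Ioc u v) :=
    fun u v hu hvt => hgI.mono_set (hsub u v hu hvt)
  have hψIuv : ∀ u v : ℝ, 0 ≤ u → v ≤ t → IntegrableOn ψ (Set.Ioc u v) :=
    fun u v hu hvt => hψI.mono_set (hsub u v hu hvt)
  have hGadd : ∀ u v : ℝ, 0 ≤ u → u ≤ v → v ≤ t →
      (∫ τ in Set.Ioc 0 v, g τ) = (∫ τ in Set.Ioc 0 u, g τ) + ∫ τ in Set.Ioc u v, g τ := by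
    intro u v hu huv hvt
    rw [← Set.Ioc_union_Ioc_eq_Ioc hu huv,
      setIntegral_union (Set.Ioc_disjoint_Ioc_of_le le_rfl) measurableSet_Ioc
        (hgIuv 0 u le_rfl (huv.trans hvt)) (hgIuv u v hu hvt)]
  have hψadd : ∀ u v : ℝ, 0 ≤ u → u ≤ v → v ≤ t →
      (∫ τ in Set.Ioc 0 v, ψ τ) = (∫ τ in Set.Ioc 0 u, ψ τ) + ∫ τ in Set.Ioc u v, ψ τ := by
    intro u v hu huv hvt
    rw [← Set.Ioc_union_Ioc_eq_Ioc hu huv,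
      setIntegral_union (Set.Ioc_disjoint_Ioc_of_le le_rfl) measurableSet_Ioc
        (hψIuv 0 u le_rfl (huv.trans hvt)) (hψIuv u v hu hvt)]
  have hGnn : ∀ u v : ℝ, 0 ≤ u → 0 ≤ ∫ τ in Set.Ioc u v, g τ := by
    intro u v hu
    apply setIntegral_nonneg measurableSet_Ioc
    exact fun τ hτ => hg_nonneg τ (hu.trans hτ.1.le)
  have hψnn : ∀ u v : ℝ, 0 ≤ u → 0 ≤ ∫ τ in Set.Ioc u v, ψ τ := by
    intro u v hu
    apply setIntegral_nonneg measurableSet_Ioc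
    intro τ hτ
    exact mul_nonneg (hg_nonneg τ (hu.trans hτ.1.le))
      (OsgoodAux.tl_nonneg hA (hS_mem τ (hu.trans hτ.1.le)).1)
  have hρ0 : ρ 0 = S 0 := by simp [hρdef, Set.Ioc_self]
  have hρmono : ∀ u v : ℝ, 0 ≤ u → u ≤ v → v ≤ t → ρ u ≤ ρ v := by
    intro u v hu huv hvt
    simp only [hρdef]
    have h1 := hψnn u v hu
    have h2 := hψadd u v hu huv hvt
    nlinarith
  have hρS0 : ∀ u : ℝ, 0 ≤ u → u ≤ t → S 0 ≤ ρ u := by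
    intro u hu hut
    have := hρmono 0 u le_rfl hu hut
    rwa [hρ0] at this
  have hSle : ∀ u : ℝ, 0 ≤ u → u ≤ t → S u ≤ ρ u := by
    intro u hu hut
    have h1 := hS u hu
    have h2 : (∫ τ in Set.Ioc 0 u, g τ * osgoodMod A (S τ)) ≤
        ∫ τ in Set.Ioc 0 u, Real.log (Real.exp 1 + 1) * ψ τ := by
      apply integral_mono_of_nonneg
      · filter_upwards [ae_restrict_mem measurableSet_Ioc] with τ hτ
        exact mul_nonneg (hg_nonneg τ hτ.1.le) (OsgoodAux.osgood_nonneg hA (hS_mem τ hτ.1.le).1)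
      · exact ((hψIuv 0 u le_rfl hut).const_mul _)
      · filter_upwards [ae_restrict_mem measurableSet_Ioc] with τ hτ
        have h3 := OsgoodAux.osgood_le_tl hA (hS_mem τ hτ.1.le).1 (hS_mem τ hτ.1.le).2
        have h4 := hg_nonneg τ hτ.1.le
        simp only [hψdef]
        nlinarith
    rw [integral_const_mul] at h2
    simp only [hρdef]
    have h5 : K * (∫ τ in Set.Ioc 0 u, g τ * osgoodMod A (S τ)) ≤
        C * ∫ τ in Set.Ioc 0 u, ψ τ := by
      rw [hCdef, mul_assoc]
      exact mul_le_mul_of_nonneg_left h2 hK.le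
    linarith
  have hρinc : ∀ u v : ℝ, 0 ≤ u → u ≤ v → v ≤ t →
      ρ v - ρ u ≤ C * OsgoodAux.tl A (ρ v) * ∫ τ in Set.Ioc u v, g τ := by
    intro u v hu huv hvt
    have h1 : ρ v - ρ u = C * ∫ τ in Set.Ioc u v, ψ τ := by
      simp only [hρdef]
      rw [hψadd u v hu huv hvt]
      ring
    have h2 : (∫ τ in Set.Ioc u v, ψ τ) ≤
        ∫ τ in Set.Ioc u v, OsgoodAux.tl A (ρ v) * g τ := by
      apply integral_mono_of_nonneg
      · filter_upwards [ae_restrict_mem measurableSet_Ioc] with τ hτ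
        exact mul_nonneg (hg_nonneg τ (hu.trans hτ.1.le))
          (OsgoodAux.tl_nonneg hA (hS_mem τ (hu.trans hτ.1.le)).1)
      · exact ((hgIuv u v hu hvt).const_mul _)
      · filter_upwards [ae_restrict_mem measurableSet_Ioc] with τ hτ
        have hτ0 : 0 ≤ τ := hu.trans hτ.1.le
        have hτt : τ ≤ t := hτ.2.trans hvt
        have hSρ : S τ ≤ ρ v := (hSle τ hτ0 hτt).trans (hρmono τ v hτ0 hτ.2 hvt)
        have h5 : OsgoodAux.tl A (S τ) ≤ OsgoodAux.tl A (ρ v) :=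
          OsgoodAux.tl_mono hA (hS_mem τ hτ0).1 hSρ
        have h6 := hg_nonneg τ hτ0
        simp only [hψdef]
        nlinarith
    rw [integral_const_mul] at h2
    rw [h1]
    calc C * ∫ τ in Set.Ioc u v, ψ τ ≤ C * (OsgoodAux.tl A (ρ v) * ∫ τ in Set.Ioc u v, g τ) :=
          mul_le_mul_of_nonneg_left h2 hC.le
      _ = C * OsgoodAux.tl A (ρ v) * ∫ τ in Set.Ioc u v, g τ := by ring
  have htlS0 : 0 < OsgoodAux.tl A (S 0) := OsgoodAux.tl_pos hA hS0 hS0A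
  have hinvcont : ContinuousOn (fun s => (OsgoodAux.tl A s)⁻¹) (Set.Ici (S 0)) := by
    apply ((OsgoodAux.tl_continuous A).continuousOn).inv₀
    intro s hs
    exact (htlS0.trans_le (OsgoodAux.tl_mono hA hS0.le hs)).ne'
  have hinvII : ∀ a b : ℝ, S 0 ≤ a → S 0 ≤ b →
      IntervalIntegrable (fun s => (OsgoodAux.tl A s)⁻¹) volume a b := by
    intro a b ha hb
    apply (hinvcont.mono ?_).intervalIntegrable
    intro x hx
    exact (le_min ha hb).trans hx.1
  have hnt : ∀ n : ℕ, 0 < (n:ℝ) → (n:ℝ) * (t / n) = t := by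
    intro n hn
    field_simp
  -- key estimate
  have key : (∫ s in (S 0)..(ρ t), (OsgoodAux.tl A s)⁻¹) ≤ C * ∫ τ in Set.Ioc 0 t, g τ := by
    have hρcont : ContinuousOn ρ (Set.Icc 0 t) := by
      have h1 : ContinuousOn (fun u => ∫ τ in Set.Ioc 0 u, ψ τ) (Set.Icc 0 t) :=
        intervalIntegral.continuousOn_primitive hψI
      simp only [hρdef]
      exact continuousOn_const.add (continuousOn_const.mul h1)
    have hΦcont : ContinuousOn (fun u => OsgoodAux.tl A (ρ u)) (Set.Icc 0 t) :=
      (OsgoodAux.tl_continuous A).comp_continuousOn hρcont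
    have hUC := isCompact_Icc.uniformContinuousOn_of_continuous hΦcont
    rw [Metric.uniformContinuousOn_iff] at hUC
    apply le_of_forall_pos_le_add
    intro ε hε
    have hCGt : 0 ≤ C * ∫ τ in Set.Ioc 0 t, g τ := mul_nonneg hC.le (hGnn 0 t le_rfl)
    set Gt := ∫ τ in Set.Ioc 0 t, g τ with hGtdef
    set δ := ε / (C * Gt + 1) with hδdef
    have hδpos : 0 < δ := div_pos hε (by nlinarith)
    have hδCG : δ * (C * Gt) ≤ ε := by
      rw [hδdef, div_mul_eq_mul_div, div_le_iff₀ (by nlinarith : (0:ℝ) < C * Gt + 1)]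
      nlinarith
    set ε' := δ * OsgoodAux.tl A (S 0) with hε'def
    have hε'pos : 0 < ε' := mul_pos hδpos htlS0
    obtain ⟨δ₀, hδ₀pos, hδ₀⟩ := hUC ε' hε'pos
    obtain ⟨n, hn⟩ := exists_nat_gt (t / δ₀)
    have hnpos : 0 < (n:ℝ) := lt_trans (div_pos htpos hδ₀pos) hn
    have hstep_pos : 0 < t / n := div_pos htpos hnpos
    have hstep : t / n < δ₀ := by
      rw [div_lt_iff₀ hnpos]
      rw [div_lt_iff₀ hδ₀pos] at hn
      linarith
    have hmain : ∀ k : ℕ, (k:ℝ) ≤ (n:ℝ) →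
        (∫ s in (S 0)..(ρ ((k:ℝ) * (t / n))), (OsgoodAux.tl A s)⁻¹)
          ≤ (1 + δ) * C * ∫ τ in Set.Ioc 0 ((k:ℝ) * (t / n)), g τ := by
      intro k
      induction k with
      | zero =>
        intro _
        have hz : ((0:ℕ):ℝ) * (t / n) = 0 := by norm_num
        rw [hz, hρ0, intervalIntegral.integral_same, Set.Ioc_self]
        simp
      | succ k ih =>
        intro hk1
        push_cast at hk1
        have hk : (k:ℝ) ≤ (n:ℝ) := by linarith
        have ihk := ih hk
        push_cast
        set u := (k:ℝ) * (t / n) with hu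
        set v := ((k:ℝ) + 1) * (t / n) with hv
        have hu0 : 0 ≤ u := mul_nonneg (Nat.cast_nonneg k) hstep_pos.le
        have huv : u ≤ v := by rw [hu, hv]; nlinarith
        have hvt : v ≤ t := by
          have h1 : ((k:ℝ) + 1) * (t / n) ≤ (n:ℝ) * (t / n) :=
            mul_le_mul_of_nonneg_right hk1 hstep_pos.le
          rw [hv]
          rw [hnt n hnpos] at h1
          exact h1
        have hut : u ≤ t := huv.trans hvt
        have hρuv : ρ u ≤ ρ v := hρmono u v hu0 huv hvt
        have hS0u : S 0 ≤ ρ u := hρS0 u hu0 hut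
        have hS0v : S 0 ≤ ρ v := hS0u.trans hρuv
        have htlρu : 0 < OsgoodAux.tl A (ρ u) :=
          htlS0.trans_le (OsgoodAux.tl_mono hA hS0.le hS0u)
        have hsplit : (∫ s in (S 0)..(ρ v), (OsgoodAux.tl A s)⁻¹) =
            (∫ s in (S 0)..(ρ u), (OsgoodAux.tl A s)⁻¹) +
              ∫ s in (ρ u)..(ρ v), (OsgoodAux.tl A s)⁻¹ :=
          (intervalIntegral.integral_add_adjacent_intervals
            (hinvII _ _ le_rfl hS0u) (hinvII _ _ hS0u hS0v)).symm
        have hmid : (∫ s in (ρ u)..(ρ v), (OsgoodAux.tl A s)⁻¹) ≤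
            (ρ v - ρ u) * (OsgoodAux.tl A (ρ u))⁻¹ := by
          have h1 : (∫ s in (ρ u)..(ρ v), (OsgoodAux.tl A s)⁻¹) ≤
              ∫ _s in (ρ u)..(ρ v), (OsgoodAux.tl A (ρ u))⁻¹ := by
            apply intervalIntegral.integral_mono_on hρuv (hinvII _ _ hS0u hS0v)
              intervalIntegrable_const
            intro x hx
            have h2 : OsgoodAux.tl A (ρ u) ≤ OsgoodAux.tl A x :=
              OsgoodAux.tl_mono hA (hS0.le.trans hS0u) hx.1
            exact inv_anti₀ htlρu h2
          rwa [intervalIntegral.integral_const, smul_eq_mul] at h1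
        have hvu : v - u = t / n := by rw [hu, hv]; ring
        have hd : dist v u < δ₀ := by
          rw [Real.dist_eq, hvu, abs_of_pos hstep_pos]
          exact hstep
        have hΦd := hδ₀ v ⟨hu0.trans huv, hvt⟩ u ⟨hu0, hut⟩ hd
        have hratio : OsgoodAux.tl A (ρ v) ≤ (1 + δ) * OsgoodAux.tl A (ρ u) := by
          rw [Real.dist_eq] at hΦd
          have h1 : OsgoodAux.tl A (ρ v) - OsgoodAux.tl A (ρ u) < ε' :=
            (le_abs_self _).trans_lt hΦd
          have h2 : OsgoodAux.tl A (S 0) ≤ OsgoodAux.tl A (ρ u) :=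
            OsgoodAux.tl_mono hA hS0.le hS0u
          rw [hε'def] at h1
          nlinarith
        have hincr := hρinc u v hu0 huv hvt
        have hGuv : 0 ≤ ∫ τ in Set.Ioc u v, g τ := hGnn u v hu0
        have h9 : 0 ≤ (OsgoodAux.tl A (ρ u))⁻¹ := inv_nonneg.2 htlρu.le
        have hcc : (C * OsgoodAux.tl A (ρ v) * ∫ τ in Set.Ioc u v, g τ) *
            (OsgoodAux.tl A (ρ u))⁻¹ ≤ (1 + δ) * C * ∫ τ in Set.Ioc u v, g τ := by
          have hx := mul_inv_cancel₀ htlρu.ne'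
          calc (C * OsgoodAux.tl A (ρ v) * ∫ τ in Set.Ioc u v, g τ) *
              (OsgoodAux.tl A (ρ u))⁻¹
              ≤ (C * ((1 + δ) * OsgoodAux.tl A (ρ u)) * ∫ τ in Set.Ioc u v, g τ) *
                (OsgoodAux.tl A (ρ u))⁻¹ := by
                apply mul_le_mul_of_nonneg_right _ h9
                apply mul_le_mul_of_nonneg_right _ hGuv
                exact mul_le_mul_of_nonneg_left hratio hC.le
            _ = (1 + δ) * C * (∫ τ in Set.Ioc u v, g τ) *
                (OsgoodAux.tl A (ρ u) * (OsgoodAux.tl A (ρ u))⁻¹) := by ring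
            _ = (1 + δ) * C * ∫ τ in Set.Ioc u v, g τ := by rw [hx, mul_one]
        have h10 : (∫ s in (ρ u)..(ρ v), (OsgoodAux.tl A s)⁻¹) ≤
            (1 + δ) * C * ∫ τ in Set.Ioc u v, g τ :=
          hmid.trans ((mul_le_mul_of_nonneg_right hincr h9).trans hcc)
        rw [hsplit, hGadd u v hu0 huv hvt, mul_add]
        exact add_le_add ihk h10
    have hfin := hmain n le_rfl
    rw [hnt n hnpos] at hfin
    rw [← hGtdef] at hfin
    calc (∫ s in (S 0)..(ρ t), (OsgoodAux.tl A s)⁻¹) ≤ (1 + δ) * C * Gt := hfin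
      _ = C * Gt + δ * (C * Gt) := by ring
      _ ≤ C * Gt + ε := by linarith
  -- endgame
  have hGt0 : 0 ≤ ∫ τ in Set.Ioc 0 t, g τ := hGnn 0 t le_rfl
  set Gt := ∫ τ in Set.Ioc 0 t, g τ with hGtdef
  set σ := Real.exp (-(C * Gt)) with hσdef
  have hσpos : 0 < σ := Real.exp_pos _
  have hexp : Real.exp (-K * Real.log (Real.exp 1 + 1) * Gt) = σ := by
    rw [hσdef]
    congr 1
    rw [hCdef]
    ring
  rw [hexp, Real.rpow_def_of_pos (div_pos hS0 hB)]
  set L := Real.log (Real.exp 1 * A) - Real.log (S 0) with hLdef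
  have hL1 : 1 ≤ L := by rw [hLdef]; exact OsgoodAux.factor_ge_one hA hS0 hS0A
  have hlogq : Real.log (S 0 / (Real.exp 1 * A)) = -L := by
    rw [Real.log_div hS0.ne' hB.ne', hLdef]; ring
  rw [hlogq]
  have hSρt : S 0 ≤ ρ t := hρS0 t ht le_rfl
  have hρtpos : 0 < ρ t := hS0.trans_le hSρt
  have hSt : S t ≤ ρ t := hSle t ht le_rfl
  rw [div_le_iff₀ hB]
  have hfinal : S t ≤ Real.exp (-L * σ) * (Real.exp 1 * A) := by
    rcases le_or_gt (ρ t) A with hρA | hρA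
    · -- case ρ t ≤ A
      rw [OsgoodAux.integral_inv_tl hA hS0 hSρt hρA, ← hLdef] at key
      set M := Real.log (Real.exp 1 * A) - Real.log (ρ t) with hMdef
      have hM1 : 1 ≤ M := by rw [hMdef]; exact OsgoodAux.factor_ge_one hA hρtpos hρA
      have h2 : L ≤ M * Real.exp (C * Gt) := by
        have h1 : Real.log L ≤ Real.log M + C * Gt := by linarith
        have h1' := Real.exp_le_exp.2 h1
        rwa [Real.exp_log (by linarith : (0:ℝ) < L), Real.exp_add,
          Real.exp_log (by linarith : (0:ℝ) < M)] at h1'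
      have h3 : L * σ ≤ M := by
        rw [hσdef, Real.exp_neg, ← div_eq_mul_inv, div_le_iff₀ (Real.exp_pos _)]
        exact h2
      have h4 : ρ t ≤ Real.exp (Real.log (Real.exp 1 * A) - L * σ) := by
        rw [← Real.exp_log hρtpos]
        apply Real.exp_le_exp.2
        have : Real.log (ρ t) = Real.log (Real.exp 1 * A) - M := by rw [hMdef]; ring
        rw [this]
        linarith
      have h5 : Real.exp (Real.log (Real.exp 1 * A) - L * σ) =
          Real.exp (-L * σ) * (Real.exp 1 * A) := by
        rw [sub_eq_add_neg, Real.exp_add, Real.exp_log hB, neg_mul]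
        ring
      rw [h5] at h4
      exact hSt.trans h4
    · -- case A < ρ t
      have h5 : (∫ s in (S 0)..A, (OsgoodAux.tl A s)⁻¹) ≤
          ∫ s in (S 0)..(ρ t), (OsgoodAux.tl A s)⁻¹ := by
        apply intervalIntegral.integral_mono_interval le_rfl hS0A hρA.le
        · filter_upwards [ae_restrict_mem measurableSet_Ioc] with s hs
          have := htlS0.trans_le (OsgoodAux.tl_mono hA hS0.le hs.1.le)
          positivity
        · exact hinvII _ _ le_rfl hSρt
      rw [OsgoodAux.integral_inv_tl hA hS0 hS0A le_rfl, ← hLdef] at h5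
      have hone : Real.log (Real.exp 1 * A) - Real.log A = 1 := by
        rw [OsgoodAux.log_eA hA]; ring
      rw [hone, Real.log_one] at h5
      have h6 : Real.log L ≤ C * Gt := by linarith
      have h7 : L ≤ Real.exp (C * Gt) := by
        rw [← Real.exp_log (by linarith : (0:ℝ) < L)]
        exact Real.exp_le_exp.2 h6
      have h8 : L * σ ≤ 1 := by
        rw [hσdef, Real.exp_neg, ← div_eq_mul_inv, div_le_one (Real.exp_pos _)]
        exact h7
      have h9 : Real.exp (-(1:ℝ)) ≤ Real.exp (-L * σ) := by
        apply Real.exp_le_exp.2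
        rw [neg_mul]
        linarith
      have h10 : Real.exp (-(1:ℝ)) * (Real.exp 1 * A) = A := by
        rw [← mul_assoc, ← Real.exp_add]
        norm_num
      have h11 : S t ≤ A := (hS_mem t ht).2
      calc S t ≤ A := h11
        _ = Real.exp (-(1:ℝ)) * (Real.exp 1 * A) := h10.symm
        _ ≤ Real.exp (-L * σ) * (Real.exp 1 * A) := by
            apply mul_le_mul_of_nonneg_right h9 hB.le
  calc S t ≤ Real.exp (-L * σ) * (Real.exp 1 * A) := hfinal
    _ = Real.exp (-L * σ) * (Real.exp 1 * A) := rfl
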